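/- Let $X$ be a Euclidean neighbourhood retract (ENR). Then the diagonal inclusion $\Delta: X \hookrightarrow X \times X$, $x \mapsto (x,x)$, is a $\mathbb{Z}/2$-cofibration, where $\mathbb{Z}/2$ acts trivially on $X$ and by transposition of factors on $X \times X$. -/

import Mathlib

open unitInterval Set

noncomputable section

/-- The space of paths in `X`: continuous maps from the unit interval. -/
abbrev PathSp (X : Type*) [TopologicalSpace X] := C(I, X)

/-- Path reversal, the `ℤ/2`-action on the path space. -/
def pathRev {X : Type*} [TopologicalSpace X] (γ : PathSp X) : PathSp X :=
  γ.comp ⟨unitInterval.symm, unitInterval.continuous_symm⟩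

/-- The evaluation map `π : PX → X × X`, `γ ↦ (γ 0, γ 1)`. -/
def evalMap (X : Type*) [TopologicalSpace X] : PathSp X → X × X :=
  fun γ => (γ 0, γ 1)

/-- `σ` is a local section of the evaluation map on `U ⊆ X × X` which is equivariant
with respect to transposition and path reversal. -/
def IsSymSection {X : Type*} [TopologicalSpace X] (U : Set (X × X))
    (sec : C(U, PathSp X)) : Prop :=
  (∀ u : U, sec u 0 = (u : X × X).1 ∧ sec u 1 = (u : X × X).2) ∧
  (∀ (u : U) (hs : Prod.swap (u : X × X) ∈ U) (t : I),
      sec ⟨Prod.swap (u : X × X), hs⟩ t = sec u (unitInterval.symm t))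

/-- `TCΣ(X) ≤ k` : there is a cover of `X × X` by `k+1` invariant open sets,
each admitting an equivariant local section of the evaluation map. -/
def TCSigma_le (X : Type*) [TopologicalSpace X] (k : ℕ) : Prop :=
  ∃ U : Fin (k + 1) → Set (X × X),
    (∀ i, IsOpen (U i)) ∧
    (∀ i, ∀ p ∈ U i, Prod.swap p ∈ U i) ∧
    (⋃ i, U i) = Set.univ ∧
    (∀ i, ∃ sec : C(U i, PathSp X), IsSymSection (U i) sec)

/-- The symmetrized topological complexity, as an extended natural number. -/
def TCSigma (X : Type*) [TopologicalSpace X] : ℕ∞ :=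
  sInf {n : ℕ∞ | ∃ k : ℕ, n = k ∧ TCSigma_le X k}

/-- `TC^{M,Σ}(X) ≤ k`: as for `TCΣ` but each set of the cover contains the diagonal and the
sections are constant on the diagonal. -/
def TCMSigma_le (X : Type*) [TopologicalSpace X] (k : ℕ) : Prop :=
  ∃ U : Fin (k + 1) → Set (X × X),
    (∀ i, IsOpen (U i)) ∧
    (∀ i, ∀ p ∈ U i, Prod.swap p ∈ U i) ∧
    (∀ i (x : X), (x, x) ∈ U i) ∧
    (⋃ i, U i) = Set.univ ∧
    (∀ i, ∃ sec : C(U i, PathSp X), IsSymSection (U i) sec ∧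
      ∀ (x : X) (h : (x, x) ∈ U i) (t : I), sec ⟨(x, x), h⟩ t = x)

/-- The monoidal symmetrized topological complexity, as an extended natural number. -/
def TCMSigma (X : Type*) [TopologicalSpace X] : ℕ∞ :=
  sInf {n : ℕ∞ | ∃ k : ℕ, n = k ∧ TCMSigma_le X k}
universe u

/-- An inclusion `A ⊆ X` of `ℤ/2`-spaces (the action given by an involution `τ` on `X`
preserving `A`) is an equivariant cofibration if it has the equivariant homotopy
extension property with respect to all spaces with involution. -/
def IsEquivCofibration {X : Type u} [TopologicalSpace X] (tau : C(X, X))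
    (A : Set X) : Prop :=
  ∀ (Y : Type u) [TopologicalSpace Y] (nu : C(Y, Y)), (∀ y, nu (nu y) = y) →
    ∀ (f : C(X, Y)) (H : C(A × I, Y)),
      (∀ x, f (tau x) = nu (f x)) →
      (∀ (a : A) (ha : tau a ∈ A) (t : I), H (⟨tau a, ha⟩, t) = nu (H (a, t))) →
      (∀ a : A, H (a, 0) = f a) →
      ∃ F : C(X × I, Y),
        (∀ x, F (x, 0) = f x) ∧
        (∀ (a : A) (t : I), F ((a : X), t) = H (a, t)) ∧
        (∀ (x : X) (t : I), F (tau x, t) = nu (F (x, t)))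
/-- A space is a Euclidean neighbourhood retract (ENR) if it embeds into some `ℝⁿ`
as a retract of an open subset. -/
def IsENR (X : Type*) [TopologicalSpace X] : Prop :=
  ∃ (n : ℕ) (e : X → EuclideanSpace ℝ (Fin n)) (U : Set (EuclideanSpace ℝ (Fin n))),
    Topology.IsEmbedding e ∧ IsOpen U ∧ Set.range e ⊆ U ∧
    ∃ r : U → X, Continuous r ∧ ∀ (x : X) (h : e x ∈ U), r ⟨e x, h⟩ = x

/-- If `X` is an ENR then the diagonal inclusion `ΔX ↪ X × X` is a
`ℤ/2`-cofibration for the transposition involution. -/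

theorem isOpen_segmentSubset' {E : Type*} [NormedAddCommGroup E] [NormedSpace ℝ E]
    {U : Set E} (hU : IsOpen U) : IsOpen {q : E × E | segment ℝ q.1 q.2 ⊆ U} := by
  rw [Metric.isOpen_iff]
  rintro ⟨a, b⟩ h
  have hcpt : IsCompact (segment ℝ a b) := by
    rw [segment_eq_image]
    exact isCompact_Icc.image (by fun_prop)
  obtain ⟨δ, hδ, hthick⟩ := hcpt.exists_thickening_subset_open hU h
  refine ⟨δ, hδ, ?_⟩
  rintro ⟨a', b'⟩ hq
  rw [Metric.mem_ball, Prod.dist_eq, max_lt_iff] at hq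
  rintro z ⟨s, t, hs, ht, hst, rfl⟩
  apply hthick
  rw [Metric.mem_thickening_iff]
  refine ⟨s • a + t • b, ⟨s, t, hs, ht, hst, rfl⟩, ?_⟩
  have hz : s • a' + t • b' - (s • a + t • b) = s • (a' - a) + t • (b' - b) := by
    module
  rw [dist_eq_norm, hz]
  have h1 : dist a' a < δ := hq.1
  have h2 : dist b' b < δ := hq.2
  rw [dist_eq_norm] at h1 h2
  calc ‖s • (a' - a) + t • (b' - b)‖ ≤ ‖s • (a' - a)‖ + ‖t • (b' - b)‖ := norm_add_le _ _
    _ = s * ‖a' - a‖ + t * ‖b' - b‖ := by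
        rw [norm_smul, norm_smul, Real.norm_of_nonneg hs, Real.norm_of_nonneg ht]
    _ ≤ max ‖a' - a‖ ‖b' - b‖ := by
        have g1 := mul_le_mul_of_nonneg_left (le_max_left ‖a' - a‖ ‖b' - b‖) hs
        have g2 := mul_le_mul_of_nonneg_left (le_max_right ‖a' - a‖ ‖b' - b‖) ht
        have g3 : s * (‖a' - a‖ ⊔ ‖b' - b‖) + t * (‖a' - a‖ ⊔ ‖b' - b‖)
            = ‖a' - a‖ ⊔ ‖b' - b‖ := by rw [← add_mul, hst, one_mul]
        linarith
    _ < δ := max_lt h1 h2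

theorem tube_aux' {Z Y : Type*} [TopologicalSpace Z] [TopologicalSpace Y]
    {Φ : Z × I → Y} (hΦ : Continuous Φ) {p : Z} {O : Set Y} (hO : IsOpen O)
    (h : ∀ s : I, Φ (p, s) ∈ O) :
    ∃ N, IsOpen N ∧ p ∈ N ∧ ∀ q ∈ N, ∀ s : I, Φ (q, s) ∈ O := by
  obtain ⟨u, v, hu, _, hpu, hIv, huv⟩ :=
    generalized_tube_lemma isCompact_singleton isCompact_univ
      (hO.preimage hΦ) (n := Φ ⁻¹' O)
      (by rintro ⟨z, s⟩ ⟨hz, -⟩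
          rw [mem_singleton_iff] at hz
          subst hz
          exact h s)
  exact ⟨u, hu, hpu rfl, fun q hq s => huv ⟨hq, hIv (mem_univ s)⟩⟩

theorem diagonal_isEquivCofibration (X : Type u) [TopologicalSpace X] (hX : IsENR X) :
    IsEquivCofibration (⟨Prod.swap, continuous_swap⟩ : C(X × X, X × X))
      {p : X × X | p.1 = p.2} := by
  classical
  obtain ⟨n, e, U, he, hU, hrange, r, hr, hre⟩ := hX
  haveI : T2Space X := he.t2Space
  have hee : Topology.IsEmbedding (Prod.map e e) := he.prodMap he
  haveI : TopologicalSpace.MetrizableSpace (X × X) := hee.metrizableSpace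
  haveI : NormalSpace (X × X) := by
    letI := TopologicalSpace.metrizableSpaceMetric (X × X)
    infer_instance
  have hec : Continuous e := he.continuous
  -- the open set V of pairs whose segment lies in U
  set V : Set (X × X) := {p | segment ℝ (e p.1) (e p.2) ⊆ U} with hVdef
  have hVopen : IsOpen V := by
    have : V = (fun p : X × X => (e p.1, e p.2)) ⁻¹' {q | segment ℝ q.1 q.2 ⊆ U} := rfl
    rw [this]
    exact (isOpen_segmentSubset' hU).preimage
      ((hec.comp continuous_fst).prodMk (hec.comp continuous_snd))
  have hΔV : ∀ p : X × X, p.1 = p.2 → p ∈ V := by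
    intro p hp
    show segment ℝ (e p.1) (e p.2) ⊆ U
    rw [← hp, segment_same]
    exact singleton_subset_iff.mpr (hrange (mem_range_self _))
  have hΔc : IsClosed {p : X × X | p.1 = p.2} := isClosed_diagonal
  obtain ⟨lam, hlam0, hlam1, hlam01⟩ :=
    exists_continuous_zero_one_of_isClosed hΔc hVopen.isClosed_compl
      (Set.disjoint_left.mpr fun p hp hc => hc (hΔV p hp))
  set lams : X × X → ℝ := fun p => max (lam p) (lam p.swap) with hlamsdef
  have hlamsc : Continuous lams :=
    lam.continuous.max (lam.continuous.comp continuous_swap)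
  have hlams_symm : ∀ p : X × X, lams p.swap = lams p := by
    intro p; simp only [hlamsdef, Prod.swap_swap]; exact max_comm _ _
  have hlams_diag : ∀ x : X, lams (x, x) = 0 := by
    intro x
    have h0 : lam (x, x) = 0 := hlam0 (show ((x, x) : X × X) ∈ _ from rfl)
    simp only [hlamsdef, Prod.swap_prod_mk, h0, max_self]
  have hlams_nonneg : ∀ p, 0 ≤ lams p := fun p => le_max_of_le_left (hlam01 p).1
  have hlams_V : ∀ p, lams p < 1 → p ∈ V := by
    intro p hp
    by_contra hc
    have h1 : lam p = 1 := hlam1 hc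
    have : (1 : ℝ) ≤ lams p := le_max_of_le_left h1.ge
    linarith
  -- the cutoff function phi
  set phi : X × X → ℝ := fun p => max 0 (min 1 (2 - 3 * lams p)) with hphidef
  have hphic : Continuous phi :=
    continuous_const.max (continuous_const.min (continuous_const.sub (hlamsc.const_smul (3:ℝ))))
  have hphi_nonneg : ∀ p, 0 ≤ phi p := fun p => le_max_left _ _
  have hphi_le1 : ∀ p, phi p ≤ 1 := by
    intro p
    apply max_le zero_le_one (min_le_left _ _)
  have hphi1 : ∀ p, lams p < 1/3 → phi p = 1 := by
    intro p hp
    have : min 1 (2 - 3 * lams p) = 1 := min_eq_left (by linarith)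
    rw [hphidef]; simp only [this]; exact max_eq_right zero_le_one
  have hphi0 : ∀ p, p ∉ V → phi p = 0 := by
    intro p hp
    have h1 : (1:ℝ) ≤ lams p := by
      by_contra hc
      exact hp (hlams_V p (by linarith))
    have : min 1 (2 - 3 * lams p) ≤ 0 := (min_le_right _ _).trans (by linarith)
    rw [hphidef]
    exact max_eq_left this
  have hphi_symm : ∀ p : X × X, phi p.swap = phi p := by
    intro p; rw [hphidef]; simp only [hlams_symm]
  -- the moving points
  set cf : X × X → I → ℝ := fun p s => (s : ℝ) * phi p / 2 with hcfdef
  have hcf_nonneg : ∀ p s, 0 ≤ cf p s := fun p s =>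
    div_nonneg (mul_nonneg s.2.1 (hphi_nonneg p)) two_pos.le
  have hcf_le : ∀ p s, cf p s ≤ 1 := by
    intro p s
    rw [hcfdef]
    have h1 : (s:ℝ) * phi p ≤ 1 :=
      mul_le_one₀ s.2.2 (hphi_nonneg p) (hphi_le1 p)
    linarith
  set pt1 : X × X → I → EuclideanSpace ℝ (Fin n) :=
    fun p s => (1 - cf p s) • e p.1 + cf p s • e p.2 with hpt1def
  set pt2 : X × X → I → EuclideanSpace ℝ (Fin n) :=
    fun p s => (1 - cf p s) • e p.2 + cf p s • e p.1 with hpt2def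
  have hptU : ∀ p (s : I), pt1 p s ∈ U ∧ pt2 p s ∈ U := by
    intro p s
    by_cases hpV : p ∈ V
    · constructor
      · exact hpV ⟨1 - cf p s, cf p s, by linarith [hcf_le p s], hcf_nonneg p s, by ring, rfl⟩
      · exact hpV ⟨cf p s, 1 - cf p s, hcf_nonneg p s, by linarith [hcf_le p s], by ring,
          by rw [hpt2def]; module⟩
    · have h0 : phi p = 0 := hphi0 p hpV
      have hc0 : cf p s = 0 := by rw [hcfdef]; simp [h0]
      constructor
      · rw [hpt1def]; simp only [hc0, sub_zero, one_smul, zero_smul, add_zero]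
        exact hrange (mem_range_self _)
      · rw [hpt2def]; simp only [hc0, sub_zero, one_smul, zero_smul, add_zero]
        exact hrange (mem_range_self _)
  -- the deformation
  set dd : (X × X) × I → X × X := fun q =>
    (r ⟨pt1 q.1 q.2, (hptU q.1 q.2).1⟩, r ⟨pt2 q.1 q.2, (hptU q.1 q.2).2⟩) with hdddef
  have hcfc : Continuous fun q : (X × X) × I => cf q.1 q.2 := by
    rw [hcfdef]
    exact ((continuous_subtype_val.comp continuous_snd).mul
      (hphic.comp continuous_fst)).div_const 2
  have hddc : Continuous dd := by
    rw [hdddef]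
    have he1 : Continuous fun q : (X × X) × I => e q.1.1 :=
      hec.comp (continuous_fst.comp continuous_fst)
    have he2 : Continuous fun q : (X × X) × I => e q.1.2 :=
      hec.comp (continuous_snd.comp continuous_fst)
    apply Continuous.prodMk
    · exact hr.comp (Continuous.subtype_mk
        (((continuous_const.sub hcfc).smul he1).add (hcfc.smul he2)) _)
    · exact hr.comp (Continuous.subtype_mk
        (((continuous_const.sub hcfc).smul he2).add (hcfc.smul he1)) _)
  have hre' : ∀ (z : EuclideanSpace ℝ (Fin n)) (hz : z ∈ U) (x : X), z = e x → r ⟨z, hz⟩ = x := by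
    rintro z hz x rfl
    exact hre x hz
  have hdd0 : ∀ p : X × X, dd (p, 0) = p := by
    intro p
    have hc0 : cf p 0 = 0 := by rw [hcfdef]; simp
    have h1 : pt1 p 0 = e p.1 := by
      rw [hpt1def]; simp only [hc0, sub_zero, one_smul, zero_smul, add_zero]
    have h2 : pt2 p 0 = e p.2 := by
      rw [hpt2def]; simp only [hc0, sub_zero, one_smul, zero_smul, add_zero]
    rw [hdddef]
    exact Prod.ext (hre' _ _ _ h1) (hre' _ _ _ h2)
  have hdd_diag : ∀ (x : X) (s : I), dd ((x, x), s) = (x, x) := by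
    intro x s
    have h1 : pt1 (x, x) s = e x := by rw [hpt1def]; show _ • e x + _ • e x = e x; module
    have h2 : pt2 (x, x) s = e x := by rw [hpt2def]; show _ • e x + _ • e x = e x; module
    rw [hdddef]
    exact Prod.ext (hre' _ _ _ h1) (hre' _ _ _ h2)
  have hdd_symm : ∀ (p : X × X) (s : I), dd (p.swap, s) = (dd (p, s)).swap := by
    intro p s
    have hcs : cf p.swap s = cf p s := by rw [hcfdef]; simp only [hphi_symm]
    have h1 : pt1 p.swap s = pt2 p s := by rw [hpt1def, hpt2def]; simp only [hcs]; rfl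
    have h2 : pt2 p.swap s = pt1 p s := by rw [hpt1def, hpt2def]; simp only [hcs]; rfl
    rw [hdddef]
    refine Prod.ext ?_ ?_
    · show r _ = r _
      congr 1
      exact Subtype.ext h1
    · show r _ = r _
      congr 1
      exact Subtype.ext h2
  have hdd_one : ∀ p : X × X, lams p < 1/3 → (dd (p, 1)).1 = (dd (p, 1)).2 := by
    intro p hp
    have hphi' : phi p = 1 := hphi1 p hp
    have hc : cf p 1 = 1/2 := by rw [hcfdef]; simp [hphi']
    have h12 : pt1 p 1 = pt2 p 1 := by
      rw [hpt1def, hpt2def]; simp only [hc]; module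
    show r _ = r _
    congr 1
    exact Subtype.ext h12
  -- the gauge function
  set uu : X × X → ℝ := fun p => max (min 1 (3 * lams p)) (min 1 (dist (e p.1) (e p.2)))
    with huudef
  have huuc : Continuous uu := by
    rw [huudef]
    exact (continuous_const.min (hlamsc.const_smul (3:ℝ))).max
      (continuous_const.min ((hec.comp continuous_fst).dist (hec.comp continuous_snd)))
  have huu0 : ∀ p, 0 ≤ uu p := fun p =>
    le_max_of_le_right (le_min zero_le_one dist_nonneg)
  have huu_le1 : ∀ p, uu p ≤ 1 :=
    fun p => max_le (min_le_left _ _) (min_le_left _ _)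
  have huu_symm : ∀ p : X × X, uu p.swap = uu p := by
    intro p
    rw [huudef]
    simp only [hlams_symm]
    rw [dist_comm]
    rfl
  have huu_diag : ∀ x : X, uu (x, x) = 0 := by
    intro x
    rw [huudef]
    simp [hlams_diag x]
  have huu_eq0 : ∀ p : X × X, uu p = 0 → p.1 = p.2 := by
    intro p hp
    have h1 : min 1 (dist (e p.1) (e p.2)) ≤ 0 := hp ▸ le_max_right _ _
    have h2 : dist (e p.1) (e p.2) = 0 := by
      rcases min_le_iff.mp h1 with h | h
      · linarith
      · exact le_antisymm h dist_nonneg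
    exact he.injective (by rwa [dist_eq_zero] at h2)
  have huu_lt1 : ∀ p : X × X, uu p < 1 → lams p < 1/3 := by
    intro p hp
    have h1 : min 1 (3 * lams p) < 1 := (le_max_left _ _).trans_lt hp
    rcases min_lt_iff.mp h1 with h | h
    · linarith
    · linarith
  have huu_dd : ∀ p : X × X, uu p < 1 → (dd (p, 1)).1 = (dd (p, 1)).2 :=
    fun p hp => hdd_one p (huu_lt1 p hp)
  -- now the extension problem
  intro Y _instY nu hnu f H hf hH hH0
  set sg : ℝ → I := Set.projIcc 0 1 zero_le_one with hsgdef
  have hsgc : Continuous sg := continuous_projIcc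
  have hsg0 : ∀ x : ℝ, x ≤ 0 → sg x = 0 := by
    intro x hx
    rw [hsgdef]
    exact Subtype.ext (by rw [Set.projIcc_of_le_left _ hx]; rfl)
  have hsgcoe : ∀ t : I, sg (t : ℝ) = t := fun t => Set.projIcc_val zero_le_one t
  set Φ₁ : (X × X) × I → Y := fun q => f (dd (q.1, sg ((q.2 : ℝ) / uu q.1))) with hΦ₁def
  set g2 : (X × X) × I → Y := fun q =>
    if h : (dd (q.1, 1)).1 = (dd (q.1, 1)).2 then
      H (⟨dd (q.1, 1), h⟩, sg ((q.2 : ℝ) - uu q.1))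
    else f (dd (q.1, 1)) with hg2def
  set F : (X × X) × I → Y := fun q => if (q.2 : ℝ) ≤ uu q.1 then Φ₁ q else g2 q with hFdef
  have hF0 : ∀ p : X × X, F (p, 0) = f p := by
    intro p
    have h0 : ((0 : I) : ℝ) = 0 := rfl
    rw [hFdef]
    dsimp only
    rw [if_pos (by rw [h0]; exact huu0 p), hΦ₁def]
    dsimp only
    have hdiv : ((0 : I) : ℝ) / uu p = 0 := by rw [h0, zero_div]
    rw [hdiv, hsg0 0 le_rfl, hdd0]
  have hFdiag : ∀ (a : ↥{p : X × X | p.1 = p.2}) (t : I), F ((a : X × X), t) = H (a, t) := by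
    rintro ⟨⟨x, y⟩, (hxy : x = y)⟩ t
    subst hxy
    have hu : uu (x, x) = 0 := huu_diag x
    by_cases ht : (t : ℝ) ≤ 0
    · have ht0 : t = 0 := Subtype.ext (le_antisymm ht t.2.1)
      subst ht0
      rw [hFdef]
      dsimp only
      rw [if_pos (by rw [hu]; exact ht), hΦ₁def]
      dsimp only
      rw [hsg0 _ (by rw [hu, div_zero]), hdd_diag]
      exact (hH0 ⟨(x, x), rfl⟩).symm
    · rw [hFdef]
      dsimp only
      rw [if_neg (by rw [hu]; exact ht), hg2def]
      dsimp only
      have hd : (dd ((x, x), 1)).1 = (dd ((x, x), 1)).2 := by rw [hdd_diag]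
      rw [dif_pos hd]
      have e1 : (⟨dd ((x, x), 1), hd⟩ : ↥{p : X × X | p.1 = p.2}) = ⟨(x, x), rfl⟩ :=
        Subtype.ext (hdd_diag x 1)
      have e2 : sg ((t : ℝ) - uu (x, x)) = t := by rw [hu, sub_zero]; exact hsgcoe t
      rw [e1, e2]
  have hFswap : ∀ (p : X × X) (t : I), F (Prod.swap p, t) = nu (F (p, t)) := by
    intro p t
    rw [hFdef]
    dsimp only
    rw [show uu (Prod.swap p) = uu p from huu_symm p]
    by_cases ht : (t : ℝ) ≤ uu p
    · rw [if_pos ht, if_pos ht, hΦ₁def]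
      dsimp only
      rw [show uu (Prod.swap p) = uu p from huu_symm p,
        show dd (Prod.swap p, sg ((t:ℝ) / uu p)) = (dd (p, sg ((t:ℝ) / uu p))).swap from
          hdd_symm p _]
      exact hf (dd (p, sg ((t:ℝ) / uu p)))
    · rw [if_neg ht, if_neg ht, hg2def]
      dsimp only
      have hs : dd (Prod.swap p, 1) = (dd (p, 1)).swap := hdd_symm p 1
      by_cases hd : (dd (p, 1)).1 = (dd (p, 1)).2
      · have hd' : (dd (Prod.swap p, 1)).1 = (dd (Prod.swap p, 1)).2 := by
          rw [hs]; exact hd.symm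
        rw [dif_pos hd, dif_pos hd']
        rw [show uu (Prod.swap p) = uu p from huu_symm p]
        have hkey := hH ⟨dd (p, 1), hd⟩ (show Prod.swap (dd (p, 1)) ∈ _ from hd.symm)
          (sg ((t : ℝ) - uu p))
        rw [← hkey]
        congr 1
        exact Prod.ext (Subtype.ext hs) rfl
      · have hd' : ¬ (dd (Prod.swap p, 1)).1 = (dd (Prod.swap p, 1)).2 := by
          rw [hs]; exact fun h => hd h.symm
        rw [dif_neg hd, dif_neg hd', hs]
        exact hf (dd (p, 1))
  have hsg1 : ∀ x : ℝ, 1 ≤ x → sg x = 1 := by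
    intro x hx
    rw [hsgdef]
    exact Subtype.ext (by rw [Set.projIcc_of_right_le _ hx]; rfl)
  set CC : Set (X × X) := {p' | (dd (p', 1)).1 = (dd (p', 1)).2} with hCCdef
  have hCCc : IsClosed CC := by
    apply isClosed_eq
    · exact continuous_fst.comp (hddc.comp (continuous_id.prodMk continuous_const))
    · exact continuous_snd.comp (hddc.comp (continuous_id.prodMk continuous_const))
  have hg2on : ContinuousOn g2 (CC ×ˢ (univ : Set I)) := by
    rw [continuousOn_iff_continuous_restrict]
    have hres : (CC ×ˢ (univ : Set I)).domRestrict g2 = fun x : ↥(CC ×ˢ (univ : Set I)) =>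
        H (⟨dd (x.val.1, 1), x.2.1⟩, sg ((x.val.2 : ℝ) - uu x.val.1)) := by
      funext x
      exact dif_pos x.2.1
    rw [hres]
    apply H.continuous.comp
    apply Continuous.prodMk
    · apply Continuous.subtype_mk
      exact hddc.comp ((continuous_fst.comp continuous_subtype_val).prodMk continuous_const)
    · exact hsgc.comp ((continuous_subtype_val.comp
        (continuous_snd.comp continuous_subtype_val)).sub
        (huuc.comp (continuous_fst.comp continuous_subtype_val)))
  have hΦ₁at : ∀ q : (X × X) × I, uu q.1 ≠ 0 → ContinuousAt Φ₁ q := by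
    intro q hq
    apply f.continuous.continuousAt.comp
    apply hddc.continuousAt.comp
    apply ContinuousAt.prodMk
    · exact continuous_fst.continuousAt
    · apply hsgc.continuousAt.comp
      exact ((continuous_subtype_val.comp continuous_snd).continuousAt).div
        ((huuc.comp continuous_fst).continuousAt) hq
  have hFcont : Continuous F := by
    rw [continuous_iff_continuousAt]
    rintro ⟨p, t₀⟩
    rcases lt_trichotomy ((t₀ : ℝ)) (uu p) with h1 | h3 | h2
    · -- strictly inside the first branch
      have hpos : (0 : ℝ) < uu p := lt_of_le_of_lt t₀.2.1 h1
      have hev : Φ₁ =ᶠ[nhds ((p, t₀) : (X × X) × I)] F := by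
        have hopen : IsOpen {q : (X × X) × I | (q.2 : ℝ) < uu q.1} :=
          isOpen_lt (continuous_subtype_val.comp continuous_snd) (huuc.comp continuous_fst)
        filter_upwards [hopen.mem_nhds h1] with q hq
        exact (if_pos hq.le).symm
      exact (hΦ₁at _ (ne_of_gt hpos)).congr hev
    · -- the boundary case
      by_cases hpC : p ∈ CC
      · rw [continuousAt_def]
        intro O hO
        obtain ⟨O', hO'O, hO'open, hvO'⟩ := mem_nhds_iff.mp hO
        have hFv : F (p, t₀) = Φ₁ (p, t₀) := if_pos h3.le
        have hg2v : g2 (p, t₀) = F (p, t₀) := by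
          rw [hFv]
          have e1 : g2 (p, t₀) = H (⟨dd (p, 1), hpC⟩, sg ((t₀ : ℝ) - uu p)) := dif_pos hpC
          have e2 : Φ₁ (p, t₀) = f (dd (p, sg ((t₀ : ℝ) / uu p))) := rfl
          rw [e1, e2]
          have hsub0 : (↑t₀ : ℝ) - uu p = 0 := by rw [h3, sub_self]
          rw [hsub0, hsg0 0 le_rfl, hH0 ⟨dd (p, 1), hpC⟩]
          show f (dd (p, 1)) = f (dd (p, sg ((t₀ : ℝ) / uu p)))
          rcases eq_or_lt_of_le (huu0 p) with hu0 | hu0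
          · have hdiag : p.1 = p.2 := huu_eq0 p hu0.symm
            have hpp : ∀ s : I, dd (p, s) = p := by
              intro s
              rw [show p = (p.1, p.1) from Prod.ext rfl hdiag.symm]
              exact hdd_diag _ s
            rw [hpp 1, hpp _]
          · have hdiv : (↑t₀ : ℝ) / uu p = 1 := by rw [h3]; exact div_self (ne_of_gt hu0)
            rw [hdiv, hsg1 1 le_rfl]
        have hthen : ∃ N ∈ nhds ((p, t₀) : (X × X) × I), ∀ q ∈ N, Φ₁ q ∈ O' := by
          rcases eq_or_lt_of_le (huu0 p) with hu0 | hu0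
          · -- uu p = 0 : use the tube lemma
            have hdiag : p.1 = p.2 := huu_eq0 p hu0.symm
            have hpp : ∀ s : I, dd (p, s) = p := by
              intro s
              rw [show p = (p.1, p.1) from Prod.ext rfl hdiag.symm]
              exact hdd_diag _ s
            have hvfp : F (p, t₀) = f p := by
              rw [hFv, hΦ₁def]
              dsimp only
              rw [hpp]
            obtain ⟨N₀, hN₀open, hpN₀, hN₀⟩ := tube_aux' (Φ := fun q : (X × X) × I => f (dd q))
              (f.continuous.comp hddc) hO'open
              (fun s => by show f (dd (p, s)) ∈ O'; rw [hpp s]; rw [hvfp] at hvO'; exact hvO')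
            refine ⟨N₀ ×ˢ (univ : Set I), (hN₀open.prod isOpen_univ).mem_nhds
              ⟨hpN₀, mem_univ _⟩, ?_⟩
            rintro q ⟨hq1, -⟩
            exact hN₀ q.1 hq1 _
          · have hΦv : Φ₁ (p, t₀) ∈ O' := by rw [← hFv]; exact hvO'
            exact ⟨Φ₁ ⁻¹' O', (hΦ₁at (p, t₀) (ne_of_gt hu0)) (hO'open.mem_nhds hΦv),
              fun q hq => hq⟩
        obtain ⟨N, hN, hNsub⟩ := hthen
        have hmem2 : g2 ⁻¹' O' ∈ nhdsWithin ((p, t₀) : (X × X) × I) (CC ×ˢ (univ : Set I)) :=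
          (hg2on (p, t₀) ⟨hpC, mem_univ _⟩) (hO'open.mem_nhds (by rw [hg2v]; exact hvO'))
        rw [mem_nhdsWithin] at hmem2
        obtain ⟨T, hTopen, hTmem, hTsub⟩ := hmem2
        apply Filter.mem_of_superset (Filter.inter_mem hN (hTopen.mem_nhds hTmem))
        rintro q ⟨hq1, hq2⟩
        show F q ∈ O
        by_cases hc : (q.2 : ℝ) ≤ uu q.1
        · rw [show F q = Φ₁ q from if_pos hc]
          exact hO'O (hNsub q hq1)
        · rw [show F q = g2 q from if_neg hc]
          have hqC : q.1 ∈ CC := huu_dd q.1 (lt_of_lt_of_le (not_le.mp hc) q.2.2.2)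
          exact hO'O (hTsub ⟨hq2, hqC, mem_univ _⟩)
      · -- p not in CC : everything is in the first branch
        have hge : (1 : ℝ) ≤ uu p := by
          by_contra hc
          exact hpC (huu_dd p (not_le.mp hc))
        have hev : Φ₁ =ᶠ[nhds ((p, t₀) : (X × X) × I)] F := by
          filter_upwards [(hCCc.isOpen_compl.prod isOpen_univ).mem_nhds
            (⟨hpC, mem_univ _⟩ : ((p, t₀) : (X × X) × I) ∈ CCᶜ ×ˢ univ)] with q hq
          refine (if_pos ?_).symm
          by_contra hc
          exact hq.1 (huu_dd q.1 (lt_of_lt_of_le (not_le.mp hc) q.2.2.2))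
        exact (hΦ₁at _ (by intro h0; rw [h0] at hge; linarith)).congr hev
    · -- strictly inside the second branch
      have hpC : p ∈ CC := huu_dd p (lt_of_lt_of_le h2 t₀.2.2)
      have hmem : CC ×ˢ (univ : Set I) ∈ nhds ((p, t₀) : (X × X) × I) := by
        have hopen : IsOpen {q : X × X | uu q < 1} := isOpen_lt huuc continuous_const
        exact Filter.mem_of_superset ((hopen.prod isOpen_univ).mem_nhds
          ⟨lt_of_lt_of_le h2 t₀.2.2, mem_univ _⟩)
          (prod_mono (fun q hq => huu_dd q hq) le_rfl)
      have hev : g2 =ᶠ[nhds ((p, t₀) : (X × X) × I)] F := by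
        have hopen : IsOpen {q : (X × X) × I | uu q.1 < (q.2 : ℝ)} :=
          isOpen_lt (huuc.comp continuous_fst) (continuous_subtype_val.comp continuous_snd)
        filter_upwards [hopen.mem_nhds h2] with q hq
        exact (if_neg (not_le.mpr hq)).symm
      exact (hg2on.continuousAt hmem).congr hev
  exact ⟨⟨F, hFcont⟩, hF0, hFdiag, hFswap⟩
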